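/- Let {B(x_i, r_i)}_{i=1}^∞ be a countable collection of closed Euclidean balls in ℝ^d that is shrinking locally and such that Lebesgue-almost every point of ℝ^d belongs to limsup B(x_i, r_i). For N, M ∈ ℕ (with M ≥ 1), define B(N,M) = {α ∈ ℝ^d : for all i ≥ N, α ∉ B(x_i, r_i/M)}. Then L^d(B(N,M)) = 0 for every N, M ≥ 1. -/

import Mathlib

open MeasureTheory Metric Set Filter

/-- For a shrinking-locally countable collection of closed Euclidean balls in `ℝ^d` whose
limsup set has full Lebesgue measure, the set
`B(N,M) = {α | ∀ i ≥ N, α ∉ B(x i, r i / M)}` has Lebesgue measure zero for all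
`N, M ∈ ℕ` with `M ≥ 1`. -/
theorem measure_BNM_eq_zero (d : ℕ)
    (x : ℕ → EuclideanSpace ℝ (Fin d)) (r : ℕ → ℝ) (hr : ∀ i, 0 < r i)
    (hshrink : ∀ (y : EuclideanSpace ℝ (Fin d)) (ρ : ℝ), 0 < ρ → ∀ ε > (0 : ℝ),
      {i : ℕ | (closedBall (x i) (r i) ∩ closedBall y ρ).Nonempty ∧ ε < r i}.Finite)
    (hae : ∀ᵐ α : EuclideanSpace ℝ (Fin d), ∀ n : ℕ, ∃ i ≥ n, α ∈ closedBall (x i) (r i))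
    (N M : ℕ) (hM : 1 ≤ M) :
    volume {α : EuclideanSpace ℝ (Fin d) |
      ∀ i ≥ N, α ∉ closedBall (x i) (r i / M)} = 0 := by
  set A : Set (EuclideanSpace ℝ (Fin d)) :=
    {α | ∀ i ≥ N, α ∉ closedBall (x i) (r i / M)} with hA_def
  have hM' : (1 : ℝ) ≤ (M : ℝ) := by exact_mod_cast hM
  have hMpos : (0 : ℝ) < (M : ℝ) := lt_of_lt_of_le one_pos hM'
  have hA : MeasurableSet A := by
    have : A = ⋂ i, ⋂ _ : N ≤ i, (closedBall (x i) (r i / M))ᶜ := by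
      ext α; simp [hA_def, mem_iInter]
    rw [this]
    exact MeasurableSet.iInter fun i =>
      MeasurableSet.iInter fun _ => measurableSet_closedBall.compl
  by_contra h0
  -- pick a density point α₀ of A which also lies in the limsup set
  have hres : volume.restrict A ≠ 0 := by
    rwa [Ne, Measure.restrict_eq_zero]
  have : NeBot (ae (volume.restrict A)) := ae_neBot.mpr hres
  obtain ⟨α₀, ⟨hα₀A, hdens⟩, hα₀lim⟩ :=
    (((ae_restrict_mem hA).and
      (Besicovitch.ae_tendsto_measure_inter_div volume A)).and
      (ae_restrict_of_ae hae)).exists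
  -- find, for each k, a ball of radius ≤ 1/(k+1) containing α₀, with index ≥ N
  have key : ∀ k : ℕ, ∃ i, N ≤ i ∧ α₀ ∈ closedBall (x i) (r i) ∧ r i ≤ 1 / (k + 1) := by
    intro k
    have hfin := hshrink α₀ 1 one_pos (1 / (k + 1)) (by positivity)
    obtain ⟨m, hm⟩ := hfin.bddAbove
    obtain ⟨i, hi, hmem⟩ := hα₀lim (max N (m + 1))
    refine ⟨i, le_trans (le_max_left _ _) hi, hmem, ?_⟩
    by_contra h
    push_neg at h
    have hiS : i ∈ {i : ℕ | (closedBall (x i) (r i) ∩ closedBall α₀ 1).Nonempty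
        ∧ 1 / (k + 1 : ℝ) < r i} :=
      ⟨⟨α₀, hmem, mem_closedBall_self one_pos.le⟩, h⟩
    have h1 : i ≤ m := hm hiS
    have h2 : m + 1 ≤ i := le_trans (le_max_right _ _) hi
    omega
  choose I hIN hImem hIsmall using key
  -- the constant c
  set c : ENNReal := ENNReal.ofReal ((1 / (2 * M)) ^ d) with hc_def
  have hc0 : c ≠ 0 := by
    rw [hc_def, Ne, ENNReal.ofReal_eq_zero, not_le]
    positivity
  -- basic facts about volumes of balls
  have hball_pos : ∀ (y : EuclideanSpace ℝ (Fin d)) (ρ : ℝ), 0 < ρ →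
      volume (closedBall y ρ) ≠ 0 := fun y ρ hρ =>
    (measure_closedBall_pos volume y hρ).ne'
  have hball_fin : ∀ (y : EuclideanSpace ℝ (Fin d)) (ρ : ℝ),
      volume (closedBall y ρ) ≠ ⊤ := fun y ρ => measure_closedBall_lt_top.ne
  -- per-index estimate
  have step : ∀ k : ℕ,
      volume (A ∩ closedBall α₀ (2 * r (I k))) / volume (closedBall α₀ (2 * r (I k))) + c
        ≤ 1 := by
    intro k
    set i := I k
    have hri := hr i
    have hsub : closedBall (x i) (r i / M) ⊆ closedBall α₀ (2 * r i) := by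
      intro β hβ
      rw [mem_closedBall] at hβ ⊢
      have h1 : dist α₀ (x i) ≤ r i := hImem k
      have h2 : r i / M ≤ r i := div_le_self hri.le hM'
      calc dist β α₀ ≤ dist β (x i) + dist (x i) α₀ := dist_triangle _ _ _
        _ ≤ r i / M + r i := by
            rw [dist_comm (x i) α₀]; exact add_le_add hβ h1
        _ ≤ 2 * r i := by linarith
    have hdisj : Disjoint (A ∩ closedBall α₀ (2 * r i)) (closedBall (x i) (r i / M)) := by
      rw [Set.disjoint_left]
      rintro β ⟨hβA, -⟩ hβB
      exact hβA i (hIN k) hβB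
    have hunion : volume (A ∩ closedBall α₀ (2 * r i)) + volume (closedBall (x i) (r i / M))
        ≤ volume (closedBall α₀ (2 * r i)) := by
      rw [← measure_union hdisj measurableSet_closedBall]
      exact measure_mono (union_subset inter_subset_right hsub)
    -- compute the ratio of ball volumes
    have hratio : volume (closedBall (x i) (r i / M)) / volume (closedBall α₀ (2 * r i)) = c := by
      rw [Measure.addHaar_closedBall _ _ (by positivity : (0:ℝ) ≤ r i / M),
        Measure.addHaar_closedBall _ _ (by positivity : (0:ℝ) ≤ 2 * r i),
        ENNReal.mul_div_mul_right _ _ (measure_ball_pos volume _ one_pos).ne'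
          measure_ball_lt_top.ne,
        ← ENNReal.ofReal_div_of_pos (by positivity), hc_def, finrank_euclideanSpace_fin,
        ← div_pow]
      congr 2
      field_simp
    calc volume (A ∩ closedBall α₀ (2 * r i)) / volume (closedBall α₀ (2 * r i)) + c
        = (volume (A ∩ closedBall α₀ (2 * r i)) + volume (closedBall (x i) (r i / M)))
            / volume (closedBall α₀ (2 * r i)) := by
          rw [← hratio, ENNReal.div_add_div_same]
      _ ≤ 1 := by
          rw [ENNReal.div_le_iff (hball_pos α₀ _ (mul_pos two_pos hri)) (hball_fin α₀ _), one_mul]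
          exact hunion
  -- the radii tend to zero
  have hρtend : Tendsto (fun k => 2 * r (I k)) atTop (nhdsWithin 0 (Ioi 0)) := by
    apply tendsto_nhdsWithin_of_tendsto_nhds_of_eventually_within
    · have h2 : Tendsto (fun k : ℕ => 2 * (1 / (k + 1 : ℝ))) atTop (nhds 0) := by
        simpa using (tendsto_one_div_add_atTop_nhds_zero_nat).const_mul (2 : ℝ)
      refine squeeze_zero (fun k => (mul_pos two_pos (hr (I k))).le) (fun k => ?_) h2
      have := hIsmall k
      nlinarith [hr (I k)]
    · exact Eventually.of_forall fun k => by
        simp only [mem_Ioi]; exact mul_pos two_pos (hr (I k))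
  have htend : Tendsto (fun k =>
      volume (A ∩ closedBall α₀ (2 * r (I k))) / volume (closedBall α₀ (2 * r (I k))) + c)
      atTop (nhds (1 + c)) :=
    (hdens.comp hρtend).add tendsto_const_nhds
  have hle : (1 : ENNReal) + c ≤ 1 := le_of_tendsto htend (Eventually.of_forall step)
  have : (1 : ENNReal) < 1 + c := ENNReal.lt_add_right ENNReal.one_ne_top hc0
  exact absurd (lt_of_lt_of_le this hle) (lt_irrefl _)
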